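/- Assume the minimal-counterexample hypothesis. Then for every index i, the modulus m_i is not a prime power; that is, m_i is divisible by at least two distinct primes. -/

import Mathlib

/-- The congruence class of `a` modulo `m`, as a set of integers. -/
def congClass (a : ℤ) (m : ℕ) : Set ℤ :=
  {x : ℤ | Int.ModEq (m : ℤ) x a}

/-- `k` is a counterexample to the Disjoint Congruence Classes Conjecture:
there are `k` pairwise disjoint congruence classes whose moduli have pairwise
gcds all strictly less than `k`. -/
def IsCounterexample (k : ℕ) : Prop :=
  ∃ (a : Fin k → ℤ) (m : Fin k → ℕ),
    (∀ i, 0 < m i) ∧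
    (∀ i j, i ≠ j → Disjoint (congClass (a i) (m i)) (congClass (a j) (m j))) ∧
    (∀ i j, i ≠ j → Nat.gcd (m i) (m j) < k)

lemma mem_congClass {a x : ℤ} {m : ℕ} : x ∈ congClass a m ↔ (m : ℤ) ∣ a - x := by
  change Int.ModEq _ _ _ ↔ _
  rw [Int.modEq_iff_dvd]

lemma not_disjoint_of_gcd_one (a b : ℤ) (m n : ℕ) (h : Nat.gcd m n = 1) :
    ¬ Disjoint (congClass a m) (congClass b n) := by
  rw [Set.not_disjoint_iff]
  refine ⟨a - m * Int.gcdA m n * (a - b), ?_, ?_⟩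
  · rw [mem_congClass]; exact ⟨Int.gcdA m n * (a - b), by ring⟩
  · rw [mem_congClass]
    have hb : ((Nat.gcd m n : ℤ)) = m * Int.gcdA m n + n * Int.gcdB m n := by
      have := Int.gcd_eq_gcd_ab (m : ℤ) (n : ℤ)
      simpa using this
    rw [h] at hb
    refine ⟨- Int.gcdB m n * (a - b), ?_⟩
    have hh : (m : ℤ) * Int.gcdA m n = 1 - n * Int.gcdB m n := by push_cast at hb; linarith
    rw [hh]; ring

lemma scale_mem {a r : ℤ} {m p : ℕ} (hp : (p:ℕ) ≠ 0) (hpm : p ∣ m)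
    (har : (p:ℤ) ∣ a - r) (y : ℤ) :
    y ∈ congClass ((a - r)/p) (m/p) ↔ r + p*y ∈ congClass a m := by
  obtain ⟨m', rfl⟩ := hpm
  obtain ⟨c, hc⟩ := har
  have hp' : (p:ℤ) ≠ 0 := by exact_mod_cast hp
  rw [mem_congClass, mem_congClass]
  rw [hc, Int.mul_ediv_cancel_left _ hp', Nat.mul_div_cancel_left _ (Nat.pos_of_ne_zero hp)]
  have h1 : a - (r + p*y) = (p:ℤ) * (c - y) := by
    have : (p:ℤ) * (c - y) = (a - r) - p * y := by rw [hc]; ring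
    rw [this]; ring
  rw [h1]
  push_cast
  rw [mul_dvd_mul_iff_left hp']

lemma disjoint_scale {a b r : ℤ} {m n p : ℕ} (hp : p ≠ 0) (hpm : p ∣ m) (hpn : p ∣ n)
    (har : (p:ℤ) ∣ a - r) (hbr : (p:ℤ) ∣ b - r)
    (hd : Disjoint (congClass a m) (congClass b n)) :
    Disjoint (congClass ((a-r)/p) (m/p)) (congClass ((b-r)/p) (n/p)) := by
  rw [Set.disjoint_left] at hd ⊢
  intro y hy1 hy2
  exact hd ((scale_mem hp hpm har y).mp hy1) ((scale_mem hp hpn hbr y).mp hy2)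

lemma two_primes_of_not_primePow {n : ℕ} (hn : 1 < n) (h : ¬ IsPrimePow n) :
    ∃ p q : ℕ, p.Prime ∧ q.Prime ∧ p ≠ q ∧ p ∣ n ∧ q ∣ n := by
  have hpf : n.minFac.Prime := Nat.minFac_prime (by omega)
  by_contra hcon
  push_neg at hcon
  have huniq : ∀ {d : ℕ}, d.Prime → d ∣ n → d = n.minFac := by
    intro d hd hdn
    by_contra hne
    exact hcon d n.minFac hd hpf hne hdn (Nat.minFac_dvd n)
  have := Nat.eq_prime_pow_of_unique_prime_dvd (by omega) huniq
  apply h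
  refine ⟨n.minFac, n.primeFactorsList.length, hpf.prime, ?_, this.symm⟩
  rcases Nat.eq_zero_or_pos n.primeFactorsList.length with h0 | h0
  · rw [h0] at this; simp at this; omega
  · exact h0

theorem min_ce_not_prime_power (k : ℕ) (a : Fin k → ℤ) (m : Fin k → ℕ)
    (hk : 2 ≤ k)
    (hm : ∀ i, 0 < m i)
    (hdisj : ∀ i j, i ≠ j → Disjoint (congClass (a i) (m i)) (congClass (a j) (m j)))
    (hgcd : ∀ i j, i ≠ j → Nat.gcd (m i) (m j) < k)
    (hkmin : ∀ k', 2 ≤ k' → IsCounterexample k' → k ≤ k')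
    (hsummin : ∀ (a' : Fin k → ℤ) (m' : Fin k → ℕ),
      (∀ i, 0 < m' i) →
      (∀ i j, i ≠ j → Disjoint (congClass (a' i) (m' i)) (congClass (a' j) (m' j))) →
      (∀ i j, i ≠ j → Nat.gcd (m' i) (m' j) < k) →
      ∑ i, m i ≤ ∑ i, m' i) :
    ∀ i, ¬ IsPrimePow (m i) ∧
      ∃ p q : ℕ, p.Prime ∧ q.Prime ∧ p ≠ q ∧ p ∣ m i ∧ q ∣ m i := by
  have key : ∀ i j : Fin k, i ≠ j → 2 ≤ Nat.gcd (m i) (m j) := by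
    intro i j hij
    have h1 : Nat.gcd (m i) (m j) ≠ 0 := Nat.gcd_ne_zero_left (hm i).ne'
    have h2 : Nat.gcd (m i) (m j) ≠ 1 :=
      fun h => not_disjoint_of_gcd_one _ _ _ _ h (hdisj i j hij)
    omega
  have hexne : ∀ i : Fin k, ∃ j : Fin k, j ≠ i := by
    intro i
    exact Fintype.exists_ne_of_one_lt_card (by rw [Fintype.card_fin]; omega) i
  intro i
  have hnpp : ¬ IsPrimePow (m i) := by
    intro hpp
    obtain ⟨p, e, hp, he, hpe⟩ := hpp
    have hpp' : p.Prime := Nat.prime_iff.mpr hp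
    have hp0 : p ≠ 0 := hpp'.ne_zero
    haveI : NeZero p := ⟨hp0⟩
    -- p divides all moduli
    have hpdvd : ∀ j, p ∣ m j := by
      intro j
      by_cases hji : j = i
      · subst hji; rw [← hpe]; exact dvd_pow_self p he.ne'
      · have hg2 := key i j (fun h => hji h.symm)
        have hgd : Nat.gcd (m i) (m j) ∣ p ^ e := hpe ▸ Nat.gcd_dvd_left _ _
        obtain ⟨t, ht, hgt⟩ := (Nat.dvd_prime_pow hpp').mp hgd
        have ht0 : t ≠ 0 := by rintro rfl; simp at hgt; omega
        have hpg : p ∣ Nat.gcd (m i) (m j) := hgt ▸ dvd_pow_self p ht0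
        exact hpg.trans (Nat.gcd_dvd_right _ _)
    -- p < k
    obtain ⟨j0, hj0⟩ := hexne i
    have hpk : p < k := by
      have h1 : p ∣ Nat.gcd (m i) (m j0) :=
        Nat.dvd_gcd (hpdvd i) (hpdvd j0)
      have h2 := hgcd i j0 (fun h => hj0 h.symm)
      have h3 := Nat.le_of_dvd (by have := key i j0 (fun h => hj0 h.symm); omega) h1
      omega
    -- pigeonhole on residues mod p
    set f : Fin k → ZMod p := fun j => ((a j : ZMod p)) with hf
    obtain ⟨rmax, -, hrmax⟩ := Finset.exists_max_image (Finset.univ : Finset (ZMod p))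
      (fun r => (Finset.univ.filter (fun j => f j = r)).card) ⟨0, Finset.mem_univ 0⟩
    set S := Finset.univ.filter (fun j => f j = rmax) with hS
    set k' := S.card with hk'
    have hkk' : k ≤ p * k' := by
      have hsum : ∑ r : ZMod p, (Finset.univ.filter (fun j => f j = r)).card = k := by
        rw [← Finset.card_eq_sum_card_fiberwise (fun x _ => Finset.mem_univ (f x))]
        simp
      calc k = ∑ r : ZMod p, (Finset.univ.filter (fun j => f j = r)).card := hsum.symm
        _ ≤ ∑ _r : ZMod p, k' := Finset.sum_le_sum (fun r _ => hrmax r (Finset.mem_univ r))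
        _ = p * k' := by simp [Finset.sum_const, ZMod.card, Nat.smul_one_eq_cast]
    have hk'2 : 2 ≤ k' := by
      rcases (show k' = 0 ∨ k' = 1 ∨ 2 ≤ k' by omega) with h0 | h0 | h0
      · rw [h0] at hkk'; omega
      · rw [h0] at hkk'; omega
      · exact h0
    -- the base residue
    set r0 : ℤ := (rmax.val : ℤ) with hr0def
    have hr0 : ∀ j, j ∈ S → (p:ℤ) ∣ a j - r0 := by
      intro j hj
      rw [hS, Finset.mem_filter] at hj
      have h1 : ((a j - r0 : ℤ) : ZMod p) = 0 := by
        push_cast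
        rw [show ((a j : ZMod p)) = rmax from hj.2]
        rw [hr0def]
        push_cast
        rw [ZMod.natCast_val, ZMod.cast_id]
        ring
      exact (ZMod.intCast_zmod_eq_zero_iff_dvd _ p).mp h1
    by_cases hcase : k' = k
    · -- all residues equal: scale the whole system, contradicting sum-minimality
      have hSuniv : S = Finset.univ := by
        apply Finset.eq_univ_of_card
        rw [← hk', hcase, Fintype.card_fin]
      have hr0' : ∀ j, (p:ℤ) ∣ a j - r0 := fun j => hr0 j (hSuniv ▸ Finset.mem_univ j)
      have hm' : ∀ j, 0 < m j / p :=
        fun j => Nat.div_pos (Nat.le_of_dvd (hm j) (hpdvd j)) (Nat.pos_of_ne_zero hp0)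
      have hd' : ∀ i' j' : Fin k, i' ≠ j' →
          Disjoint (congClass ((a i' - r0)/(p:ℤ)) (m i' / p))
            (congClass ((a j' - r0)/(p:ℤ)) (m j' / p)) := by
        intro i' j' hij
        exact disjoint_scale hp0 (hpdvd i') (hpdvd j') (hr0' i') (hr0' j') (hdisj i' j' hij)
      have hg' : ∀ i' j' : Fin k, i' ≠ j' → Nat.gcd (m i' / p) (m j' / p) < k := by
        intro i' j' hij
        have hgg : Nat.gcd (m i' / p) (m j' / p) * p = Nat.gcd (m i') (m j') := by
          conv_rhs => rw [← Nat.div_mul_cancel (hpdvd i'), ← Nat.div_mul_cancel (hpdvd j')]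
          rw [Nat.gcd_mul_right]
        have h2 := hgcd i' j' hij
        have h3 : Nat.gcd (m i' / p) (m j' / p) ≤ Nat.gcd (m i' / p) (m j' / p) * p :=
          Nat.le_mul_of_pos_right _ (Nat.pos_of_ne_zero hp0)
        omega
      have hle : (∑ j, m j) ≤ ∑ j, m j / p :=
        hsummin (fun j => (a j - r0)/(p:ℤ)) (fun j => m j / p) hm' hd' hg'
      have hlt : ∑ j, m j / p < ∑ j, m j := by
        apply Finset.sum_lt_sum_of_nonempty
        · exact Finset.univ_nonempty_iff.mpr ⟨⟨0, by omega⟩⟩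
        · exact fun j _ => Nat.div_lt_self (hm j) hpp'.one_lt
      omega
    · -- proper subfamily: a smaller counterexample, contradicting hkmin
      have hk'lt : k' < k := by
        have : S.card ≤ Fintype.card (Fin k) := Finset.card_le_univ S
        rw [Fintype.card_fin] at this
        omega
      let e : Fin k' → Fin k := fun t => ((S.equivFin.symm (Fin.cast hk' t)) : {x // x ∈ S}).1
      have heS : ∀ t, e t ∈ S := fun t => (S.equivFin.symm (Fin.cast hk' t)).2
      have hei : Function.Injective e := by
        intro t s hts
        have := Subtype.ext hts
        have h2 := S.equivFin.symm.injective this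
        exact Fin.val_injective (by simpa using congrArg Fin.val h2)
      have hce : IsCounterexample k' := by
        refine ⟨fun t => (a (e t) - r0)/(p:ℤ), fun t => m (e t) / p, ?_, ?_, ?_⟩
        · exact fun t => Nat.div_pos (Nat.le_of_dvd (hm _) (hpdvd _)) (Nat.pos_of_ne_zero hp0)
        · intro t s hts
          exact disjoint_scale hp0 (hpdvd _) (hpdvd _) (hr0 _ (heS t)) (hr0 _ (heS s))
            (hdisj _ _ (fun h => hts (hei h)))
        · intro t s hts
          have hets : e t ≠ e s := fun h => hts (hei h)
          have hgg : Nat.gcd (m (e t) / p) (m (e s) / p) * p = Nat.gcd (m (e t)) (m (e s)) := by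
            conv_rhs => rw [← Nat.div_mul_cancel (hpdvd (e t)), ← Nat.div_mul_cancel (hpdvd (e s))]
            rw [Nat.gcd_mul_right]
          have h2 := hgcd (e t) (e s) hets
          -- gcd' * p < k ≤ p * k'  ⇒ gcd' < k'
          have h3 : Nat.gcd (m (e t) / p) (m (e s) / p) * p < k' * p := by
            rw [hgg, mul_comm k' p]; omega
          exact Nat.lt_of_mul_lt_mul_right h3
      have := hkmin k' hk'2 hce
      omega
  -- conclude
  obtain ⟨j0, hj0⟩ := hexne i
  have h1lt : 1 < m i := by
    have h1 := key i j0 (fun h => hj0 h.symm)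
    have h2 := Nat.le_of_dvd (hm i) (Nat.gcd_dvd_left (m i) (m j0))
    omega
  exact ⟨hnpp, two_primes_of_not_primePow h1lt hnpp⟩
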